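/- Convex lower-level reformulation: Suppose for each x ∈ X, each g_j(x,·) is convex and each h_i(x,·) is concave on ℝ^p, and the minimum of g_j(x,·) over U(x) = {u : h(x,u) ≥ 0} is attained at a KKT point for every x ∈ X. Then x ∈ X is feasible for the GSIP (g(x,u) ≥ 0 for all u ∈ U(x)) if and only if for each j there exist z_j ∈ ℝ^p and λ_j ∈ ℝ^m satisfying ∇_u h(x, z_j) λ_j = ∇_u g_j(x, z_j), 0 ≤ h(x, z_j) ⊥ λ_j ≥ 0, and g_j(x, z_j) ≥ 0. -/

import Mathlib

open Set

/-- Gradient inequality for convex functions: `f z + ⟪∇f z, u - z⟫ ≤ f u`. -/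
lemma convex_gradient_ineq {E : Type*} [NormedAddCommGroup E] [InnerProductSpace ℝ E]
    [CompleteSpace E] {f : E → ℝ} (hc : ConvexOn ℝ Set.univ f)
    (hd : Differentiable ℝ f) (z u : E) :
    f z + inner ℝ (gradient f z) (u - z) ≤ f u := by
  have hG : HasGradientAt f (gradient f z) z := (hd z).hasGradientAt
  have hF : HasFDerivAt f ((InnerProductSpace.toDual ℝ E) (gradient f z)) z :=
    (hasGradientAt_iff_hasFDerivAt).mp hG
  set φ : ℝ → ℝ := fun t => f (z + t • (u - z)) with hφdef
  have hline : HasDerivAt (fun t : ℝ => z + t • (u - z)) (u - z) 0 := by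
    simpa using ((hasDerivAt_id (0:ℝ)).smul_const (u - z)).const_add z
  have hφ : HasDerivAt φ (inner ℝ (gradient f z) (u - z)) 0 := by
    have hF' : HasFDerivAt f ((InnerProductSpace.toDual ℝ E) (gradient f z))
        (z + (0:ℝ) • (u - z)) := by simpa using hF
    have := hF'.comp_hasDerivAt (x := (0:ℝ)) hline
    simpa [InnerProductSpace.toDual_apply_apply, hφdef, Function.comp_def] using this
  have hφc : ConvexOn ℝ Set.univ φ := by
    have haff : ConvexOn ℝ ((fun t : ℝ => z + t • (u - z)) ⁻¹' Set.univ)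
        (f ∘ (AffineMap.lineMap z u : ℝ →ᵃ[ℝ] E)) := by
      simpa using hc.comp_affineMap (AffineMap.lineMap z u)
    have : (f ∘ (AffineMap.lineMap z u : ℝ →ᵃ[ℝ] E)) = φ := by
      funext t
      simp [hφdef, AffineMap.lineMap_apply, add_comm]
    rwa [this, Set.preimage_univ] at haff
  have hslope := hφc.le_slope_of_hasDerivWithinAt_Ioi (Set.mem_univ 0) (Set.mem_univ 1)
    zero_lt_one hφ.hasDerivWithinAt
  rw [slope_def_field] at hslope
  have h0 : φ 0 = f z := by simp [hφdef]
  have h1 : φ 1 = f u := by simp [hφdef]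
  rw [h0, h1] at hslope
  rw [sub_zero, div_one] at hslope
  linarith [hslope]

/-- Gradient inequality for concave functions: `f u ≤ f z + ⟪∇f z, u - z⟫`. -/
lemma concave_gradient_ineq {E : Type*} [NormedAddCommGroup E] [InnerProductSpace ℝ E]
    [CompleteSpace E] {f : E → ℝ} (hc : ConcaveOn ℝ Set.univ f)
    (hd : Differentiable ℝ f) (z u : E) :
    f u ≤ f z + inner ℝ (gradient f z) (u - z) := by
  have hdneg : Differentiable ℝ (fun v => -(f v)) := hd.neg
  have hgradneg : gradient (fun v => -(f v)) z = -(gradient f z) := by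
    have hF : HasFDerivAt f ((InnerProductSpace.toDual ℝ E) (gradient f z)) z :=
      (hasGradientAt_iff_hasFDerivAt).mp (hd z).hasGradientAt
    have hFneg : HasFDerivAt (fun v => -(f v))
        ((InnerProductSpace.toDual ℝ E) (-(gradient f z))) z := by
      simpa [map_neg, Pi.neg_def] using hF.neg
    simpa [gradient] using (hasFDerivAt_iff_hasGradientAt.mp hFneg).gradient
  have := convex_gradient_ineq (f := fun v => -(f v)) hc.neg hdneg z u
  rw [hgradneg, inner_neg_left] at this
  linarith


/-- Convex lower-level reformulation: if each `g_j(x,·)` is convex, each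
`h_i(x,·)` is concave, and the lower-level minimum is attained at a KKT
point for every `x ∈ X`, then `x ∈ X` is GSIP feasible iff for each `j`
there exist `z_j, λ_j` satisfying the KKT conditions with `g_j(x,z_j) ≥ 0`. -/
theorem convex_lower_level_reformulation {n p m s : ℕ}
    (X : Set (Fin n → ℝ))
    (g : Fin s → (Fin n → ℝ) → EuclideanSpace ℝ (Fin p) → ℝ)
    (h : Fin m → (Fin n → ℝ) → EuclideanSpace ℝ (Fin p) → ℝ)
    (hgconv : ∀ j, ∀ x ∈ X, ConvexOn ℝ Set.univ (g j x))
    (hgdiff : ∀ j, ∀ x ∈ X, Differentiable ℝ (g j x))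
    (hhconc : ∀ i, ∀ x ∈ X, ConcaveOn ℝ Set.univ (h i x))
    (hhdiff : ∀ i, ∀ x ∈ X, Differentiable ℝ (h i x))
    (hKKT : ∀ x ∈ X, ∀ j, ∃ (z : EuclideanSpace ℝ (Fin p)) (lam : Fin m → ℝ),
        gradient (g j x) z = ∑ i, lam i • gradient (h i x) z ∧
        (∀ i, 0 ≤ lam i) ∧ (∀ i, 0 ≤ h i x z) ∧ (∀ i, lam i * h i x z = 0) ∧
        ∀ u, (∀ i, 0 ≤ h i x u) → g j x z ≤ g j x u) :
    ∀ x ∈ X,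
      ((∀ u, (∀ i, 0 ≤ h i x u) → ∀ j, 0 ≤ g j x u) ↔
        ∀ j, ∃ (z : EuclideanSpace ℝ (Fin p)) (lam : Fin m → ℝ),
          gradient (g j x) z = ∑ i, lam i • gradient (h i x) z ∧
          (∀ i, 0 ≤ lam i) ∧ (∀ i, 0 ≤ h i x z) ∧
          (∀ i, lam i * h i x z = 0) ∧ 0 ≤ g j x z) := by
  intro x hx
  constructor
  · intro hfeas j
    obtain ⟨z, lam, heq, hlam, hzfeas, hcomp, _⟩ := hKKT x hx j
    exact ⟨z, lam, heq, hlam, hzfeas, hcomp, hfeas z hzfeas j⟩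
  · intro hwit u hu j
    obtain ⟨z, lam, heq, hlam, hzfeas, hcomp, hgz⟩ := hwit j
    have hgineq := convex_gradient_ineq (hgconv j x hx) (hgdiff j x hx) z u
    have hsum : inner ℝ (gradient (g j x) z) (u - z)
        = ∑ i, lam i * inner ℝ (gradient (h i x) z) (u - z) := by
      rw [heq, sum_inner]
      congr 1; funext i; rw [real_inner_smul_left]
    have hterm : ∀ i, lam i * h i x u ≤ lam i * inner ℝ (gradient (h i x) z) (u - z) := by
      intro i
      have hhineq := concave_gradient_ineq (hhconc i x hx) (hhdiff i x hx) z u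
      have : h i x u - h i x z ≤ inner ℝ (gradient (h i x) z) (u - z) := by linarith
      calc lam i * h i x u = lam i * (h i x u - h i x z) := by
            have := hcomp i; ring_nf; nlinarith [hcomp i]
        _ ≤ lam i * inner ℝ (gradient (h i x) z) (u - z) :=
            mul_le_mul_of_nonneg_left this (hlam i)
    have hnonneg : (0:ℝ) ≤ ∑ i, lam i * inner ℝ (gradient (h i x) z) (u - z) := by
      calc (0:ℝ) ≤ ∑ i, lam i * h i x u :=
            Finset.sum_nonneg fun i _ => mul_nonneg (hlam i) (hu i)
        _ ≤ _ := Finset.sum_le_sum fun i _ => hterm i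
    have : g j x z ≤ g j x u := by rw [hsum] at hgineq; linarith
    linarith
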